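/- Let G be a group with elements a_1, ..., a_{g-1}, u_1, ..., u_{g-1} (g ≥ 3) satisfying the braid relations within each family, a_i u_j = u_j a_i for |i-j|>1, a_i u_{i+1} u_i = u_{i+1} u_i a_{i+1}, a_{i+1} u_i u_{i+1} = u_i u_{i+1} a_i, a_1 u_1 a_1 = u_1, and u_2 a_1 a_2 u_1 = a_1 a_2. Then for each i = 1, ..., g-1 the element u_i conjugates a_i to its inverse up to the derived relation: a_i u_i a_i = u_i, equivalently u_i a_i u_i^{-1} = a_i^{-1}, and moreover setting x = a_i a_{i+1} (for i ≤ g-2) one has x a_i u_i x^{-1} = a_{i+1} u_{i+1}^{-1}. -/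
import Mathlib


variable {G : Type*} [Group G]

/-- `prodAsc f m = f 1 * f 2 * ⋯ * f m` (empty product for `m = 0`). -/
def prodAsc (f : ℕ → G) (m : ℕ) : G :=
  ((List.range m).map (fun i => f (i + 1))).prod

/-- `prodDesc f m = f m * ⋯ * f 2 * f 1` (empty product for `m = 0`). -/
def prodDesc (f : ℕ → G) (m : ℕ) : G :=
  (((List.range m).reverse).map (fun i => f (i + 1))).prod

/-- The fundamental braid element: `Δ 0 = Δ 1 = 1`, `Δ (m+1) = (u 1 ⋯ u m) * Δ m`. -/
def braidDelta (u : ℕ → G) : ℕ → G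
  | 0 => 1
  | m + 1 => prodAsc u m * braidDelta u m

/-- Induction step for (C4a). -/
lemma helperA (v w b c : G) (h1 : c * v * w = v * w * b)
    (h2 : v * w * v = w * v * w) (h3 : b * v * b = v) : c * w * c = w := by
  have hc : c = v * w * b * w⁻¹ * v⁻¹ := by rw [← h1]; group
  have hmid : w⁻¹ * (v⁻¹ * (w * v * w)) = v := by rw [← h2]; group
  calc c * w * c
      = v * w * (b * (w⁻¹ * (v⁻¹ * (w * v * w))) * b) * w⁻¹ * v⁻¹ := by rw [hc]; group
    _ = v * w * (b * v * b) * w⁻¹ * v⁻¹ := by rw [hmid]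
    _ = v * w * v * w⁻¹ * v⁻¹ := by rw [h3]
    _ = w := by rw [h2]; group

/-- Induction step for the auxiliary relation (C5a). -/
lemma helperB (p q r b c d : G)
    (f1 : p * q * p = q * p * q) (f2 : q * r * q = r * q * r) (f3 : p * r = r * p)
    (f4 : b * r = r * b) (f5 : d * p = p * d)
    (f6 : c * p * q = p * q * b) (f7 : d * q * r = q * r * c)
    (hRi : q * b * c * p = b * c) : r * c * d * q = c * d := by
  have cp : p * q * r * p = q * (p * q * r) := by
    calc p * q * r * p = p * q * (r * p) := by group
      _ = p * q * (p * r) := by rw [f3]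
      _ = (p * q * p) * r := by group
      _ = (q * p * q) * r := by rw [f1]
      _ = q * (p * q * r) := by group
  have cq : p * q * r * q = r * (p * q * r) := by
    calc p * q * r * q = p * (q * r * q) := by group
      _ = p * (r * q * r) := by rw [f2]
      _ = (p * r) * (q * r) := by group
      _ = (r * p) * (q * r) := by rw [f3]
      _ = r * (p * q * r) := by group
  have cb : p * q * r * b = c * (p * q * r) := by
    calc p * q * r * b = p * q * (b * r) := by rw [mul_assoc, ← f4]
      _ = (p * q * b) * r := by group
      _ = (c * p * q) * r := by rw [← f6]
      _ = c * (p * q * r) := by group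
  have cc : p * q * r * c = d * (p * q * r) := by
    calc p * q * r * c = p * (q * r * c) := by group
      _ = p * (d * q * r) := by rw [← f7]
      _ = (p * d) * (q * r) := by group
      _ = (d * p) * (q * r) := by rw [← f5]
      _ = d * (p * q * r) := by group
  have lhs : (p * q * r) * (q * b * c * p) = (r * c * d * q) * (p * q * r) := by
    calc (p * q * r) * (q * b * c * p) = (p * q * r * q) * (b * (c * p)) := by group
      _ = (r * (p * q * r)) * (b * (c * p)) := by rw [cq]
      _ = r * ((p * q * r * b) * (c * p)) := by group
      _ = r * ((c * (p * q * r)) * (c * p)) := by rw [cb]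
      _ = r * (c * ((p * q * r * c) * p)) := by group
      _ = r * (c * ((d * (p * q * r)) * p)) := by rw [cc]
      _ = r * (c * (d * (p * q * r * p))) := by group
      _ = r * (c * (d * (q * (p * q * r)))) := by rw [cp]
      _ = (r * c * d * q) * (p * q * r) := by group
  have rhs : (p * q * r) * (b * c) = (c * d) * (p * q * r) := by
    calc (p * q * r) * (b * c) = (p * q * r * b) * c := by group
      _ = (c * (p * q * r)) * c := by rw [cb]
      _ = c * (p * q * r * c) := by group
      _ = c * (d * (p * q * r)) := by rw [cc]
      _ = (c * d) * (p * q * r) := by group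
  have key : (r * c * d * q) * (p * q * r) = (c * d) * (p * q * r) := by
    rw [← lhs, ← rhs, hRi]
  exact mul_right_cancel key

/-- (C4a) a_i u_i a_i = u_i, equivalently u_i a_i u_i⁻¹ = a_i⁻¹, for
1 ≤ i ≤ g-1; and, for 1 ≤ i ≤ g-2 and x = a_i a_{i+1},
x (a_i u_i) x⁻¹ = a_{i+1} u_{i+1}⁻¹. -/
theorem rel_C4a_and_conj (g : ℕ) (hg : 3 ≤ g) (a u : ℕ → G)
    (ha1 : ∀ i j, 1 ≤ i → i + 2 ≤ j → j ≤ g - 1 → a i * a j = a j * a i)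
    (ha2 : ∀ i, 1 ≤ i → i + 1 ≤ g - 1 → a i * a (i + 1) * a i = a (i + 1) * a i * a (i + 1))
    (hu1 : ∀ i j, 1 ≤ i → i + 2 ≤ j → j ≤ g - 1 → u i * u j = u j * u i)
    (hu2 : ∀ i, 1 ≤ i → i + 1 ≤ g - 1 → u i * u (i + 1) * u i = u (i + 1) * u i * u (i + 1))
    (hC1 : ∀ i j, 1 ≤ i → i ≤ g - 1 → 1 ≤ j → j ≤ g - 1 → (i + 2 ≤ j ∨ j + 2 ≤ i) →
      a i * u j = u j * a i)
    (hC2 : ∀ i, 1 ≤ i → i ≤ g - 2 → a i * u (i + 1) * u i = u (i + 1) * u i * a (i + 1))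
    (hC3 : ∀ i, 1 ≤ i → i ≤ g - 2 → a (i + 1) * u i * u (i + 1) = u i * u (i + 1) * a i)
    (hC4 : a 1 * u 1 * a 1 = u 1)
    (hC5 : u 2 * a 1 * a 2 * u 1 = a 1 * a 2)
    :
    (∀ i, 1 ≤ i → i ≤ g - 1 →
      a i * u i * a i = u i ∧ u i * a i * (u i)⁻¹ = (a i)⁻¹) ∧
    (∀ i, 1 ≤ i → i ≤ g - 2 →
      (a i * a (i + 1)) * (a i * u i) * (a i * a (i + 1))⁻¹ =
        a (i + 1) * (u (i + 1))⁻¹) := by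
  have A : ∀ i, 1 ≤ i → i ≤ g - 1 → a i * u i * a i = u i := by
    intro i
    induction i with
    | zero => intro h _; exact absurd h (by omega)
    | succ n ih =>
      intro _ hle
      rcases Nat.eq_zero_or_pos n with h0 | hpos
      · subst h0; exact hC4
      · exact helperA (u n) (u (n + 1)) (a n) (a (n + 1))
          (hC3 n hpos (by omega)) (hu2 n hpos (by omega)) (ih hpos (by omega))
  have B : ∀ i, 1 ≤ i → i ≤ g - 2 →
      u (i + 1) * a i * a (i + 1) * u i = a i * a (i + 1) := by
    intro i
    induction i with
    | zero => intro h _; exact absurd h (by omega)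
    | succ n ih =>
      intro _ hle
      rcases Nat.eq_zero_or_pos n with h0 | hpos
      · subst h0; simpa using hC5
      · exact helperB (u n) (u (n + 1)) (u (n + 2)) (a n) (a (n + 1)) (a (n + 2))
          (hu2 n hpos (by omega)) (hu2 (n + 1) (by omega) (by omega))
          (hu1 n (n + 2) hpos (by omega) (by omega))
          (hC1 n (n + 2) hpos (by omega) (by omega) (by omega) (Or.inl (by omega)))
          (hC1 (n + 2) n (by omega) (by omega) hpos (by omega) (Or.inr (by omega)))
          (hC3 n hpos (by omega)) (hC3 (n + 1) (by omega) (by omega))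
          (ih hpos (by omega))
  refine ⟨fun i h1 h2 => ⟨A i h1 h2, ?_⟩, fun i h1 h2 => ?_⟩
  · have h := A i h1 h2
    have h' : a i * (u i * a i * (u i)⁻¹) = a i * (a i)⁻¹ := by
      calc a i * (u i * a i * (u i)⁻¹) = (a i * u i * a i) * (u i)⁻¹ := by group
        _ = u i * (u i)⁻¹ := by rw [h]
        _ = a i * (a i)⁻¹ := by group
    exact mul_left_cancel h'
  · have hB := B i h1 h2
    have hbraid := ha2 i h1 (by omega)
    have hb : (u (i + 1))⁻¹ * (a i * a (i + 1)) = (a i * a (i + 1)) * u i := by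
      apply mul_left_cancel (a := u (i + 1))
      calc u (i + 1) * ((u (i + 1))⁻¹ * (a i * a (i + 1))) = a i * a (i + 1) := by group
        _ = u (i + 1) * a i * a (i + 1) * u i := hB.symm
        _ = u (i + 1) * ((a i * a (i + 1)) * u i) := by group
    refine mul_right_cancel (b := a i * a (i + 1)) ?_
    calc (a i * a (i + 1)) * (a i * u i) * (a i * a (i + 1))⁻¹ * (a i * a (i + 1))
        = (a i * a (i + 1) * a i) * u i := by group
      _ = (a (i + 1) * a i * a (i + 1)) * u i := by rw [hbraid]
      _ = a (i + 1) * ((u (i + 1))⁻¹ * (a i * a (i + 1))) := by rw [hb]; group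
      _ = a (i + 1) * (u (i + 1))⁻¹ * (a i * a (i + 1)) := by group
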